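/- arXiv:1905.02381 — 6 statements merged into one kernel-verified Lean document; each statement's English description precedes it below -/
import Mathlib

section
/- For every natural number n ≥ 2, we have Σ_{i=1}^{n} 1/i > 2 · Σ_{i=n+1}^{2n} 1/i; equivalently, Σ_{i=1}^{n} (1/i − 2/(n+i)) > 0. -/
/-- For n ≥ 2, `∑_{i=1}^{n} 1/i > 2 · ∑_{i=n+1}^{2n} 1/i`; equivalently
`∑_{i=1}^{n} (1/i − 2/(n+i)) > 0`. -/
theorem stmt_3 (n : ℕ) (hn : 2 ≤ n) :
    (2 * ∑ i ∈ Finset.Icc (n + 1) (2 * n), (1 : ℝ) / (i : ℝ)) <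
        ∑ i ∈ Finset.Icc 1 n, (1 : ℝ) / (i : ℝ) ∧
      0 < ∑ i ∈ Finset.Icc 1 n, ((1 : ℝ) / (i : ℝ) - 2 / ((n : ℝ) + (i : ℝ))) := by
  have key : 0 < ∑ i ∈ Finset.Icc 1 n, ((1 : ℝ) / (i : ℝ) - 2 / ((n : ℝ) + (i : ℝ))) := by
    apply Finset.sum_pos'
    · intro i hi
      simp only [Finset.mem_Icc] at hi
      have h1 : (1 : ℝ) ≤ (i : ℝ) := by exact_mod_cast hi.1
      have h2 : (i : ℝ) ≤ (n : ℝ) := by exact_mod_cast hi.2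
      have hi0 : (0 : ℝ) < i := by linarith
      have hni : (0 : ℝ) < (n : ℝ) + i := by linarith
      rw [sub_nonneg, div_le_div_iff₀ hni hi0]
      linarith
    · refine ⟨1, Finset.mem_Icc.mpr ⟨le_refl 1, by omega⟩, ?_⟩
      have hn3 : (3 : ℝ) ≤ (n : ℝ) + 1 := by
        have : (2 : ℝ) ≤ n := by exact_mod_cast hn
        linarith
      push_cast
      rw [sub_pos, div_lt_div_iff₀ (by linarith) (by norm_num)]
      linarith
  have reindex : ∑ i ∈ Finset.Icc (n + 1) (2 * n), (1 : ℝ) / (i : ℝ)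
      = ∑ i ∈ Finset.Icc 1 n, (1 : ℝ) / ((n : ℝ) + (i : ℝ)) := by
    rw [show 2 * n = n + n by ring, ← Finset.map_add_left_Icc 1 n n,
      Finset.sum_map]
    simp [addLeftEmbedding]
  refine ⟨?_, key⟩
  have expand : ∑ i ∈ Finset.Icc 1 n, ((1 : ℝ) / (i : ℝ) - 2 / ((n : ℝ) + (i : ℝ)))
      = (∑ i ∈ Finset.Icc 1 n, (1 : ℝ) / (i : ℝ))
        - 2 * ∑ i ∈ Finset.Icc 1 n, (1 : ℝ) / ((n : ℝ) + (i : ℝ)) := by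
    rw [Finset.sum_sub_distrib, Finset.mul_sum]
    congr 1
    apply Finset.sum_congr rfl
    intro i _
    ring
  rw [reindex]
  linarith [key, expand ▸ key]
end

section
/- For every odd natural number k ≥ 1, we have Σ_{i=1}^{(k+1)/2} 1/i > 2 · Σ_{j=(k+3)/2}^{k} 1/j. -/
lemma aux_main (m : ℕ) :
    (2 * ∑ j ∈ Finset.Icc (m + 2) (2 * m + 1), (1 : ℝ) / (j : ℝ)) <
      ∑ i ∈ Finset.Icc 1 (m + 1), (1 : ℝ) / (i : ℝ) := by
  have hre : ∑ j ∈ Finset.Icc (m + 2) (2 * m + 1), (1 : ℝ) / (j : ℝ)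
      = ∑ i ∈ Finset.Icc 2 (m + 1), (1 : ℝ) / ((i : ℝ) + m) := by
    rw [show m + 2 = 2 + m from by omega, show 2 * m + 1 = (m + 1) + m from by omega,
      ← Finset.map_add_right_Icc 2 (m + 1) m, Finset.sum_map]
    apply Finset.sum_congr rfl
    intro i _
    simp [addRightEmbedding]
  have hsplit : ∑ i ∈ Finset.Icc 1 (m + 1), (1 : ℝ) / (i : ℝ)
      = 1 + ∑ i ∈ Finset.Icc 2 (m + 1), (1 : ℝ) / (i : ℝ) := by
    rw [show Finset.Icc 1 (m + 1) = insert 1 (Finset.Icc 2 (m + 1)) by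
      ext x; simp [Finset.mem_Icc, Finset.mem_insert]; omega]
    rw [Finset.sum_insert (by simp)]
    norm_num
  rw [hre, hsplit, Finset.mul_sum]
  have key : ∑ i ∈ Finset.Icc 2 (m + 1), (2 * ((1 : ℝ) / ((i : ℝ) + m))
      - (1 : ℝ) / (i : ℝ)) < 1 := by
    rcases Nat.eq_zero_or_pos m with hm | hm
    · subst hm; simp
    · rw [Finset.sum_Icc_succ_top (by omega : 2 ≤ m + 1)]
      have h1 : ∑ i ∈ Finset.Icc 2 m, (2 * ((1 : ℝ) / ((i : ℝ) + m))
          - (1 : ℝ) / (i : ℝ)) ≤ 0 := by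
        apply Finset.sum_nonpos
        intro i hi
        simp only [Finset.mem_Icc] at hi
        have hi0 : (0 : ℝ) < i := by exact_mod_cast Nat.lt_of_lt_of_le (by norm_num) hi.1
        have him : (i : ℝ) ≤ m := by exact_mod_cast hi.2
        have h4 : (0 : ℝ) < (i : ℝ) + m := by linarith
        have : 2 * ((1 : ℝ) / ((i : ℝ) + m)) ≤ 1 / i := by
          rw [mul_one_div, div_le_div_iff₀ h4 hi0]; linarith
        linarith
      have h2 : 2 * ((1 : ℝ) / (((m : ℝ) + 1) + m)) - (1 : ℝ) / ((m : ℝ) + 1) < 1 := by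
        have hm1 : (1 : ℝ) ≤ m := by exact_mod_cast hm
        have hp1 : (0 : ℝ) < (m : ℝ) + 1 + m := by linarith
        have hp2 : (0 : ℝ) < (m : ℝ) + 1 := by linarith
        have h5 : 2 * ((1 : ℝ) / ((m : ℝ) + 1 + m)) < 1 := by
          rw [mul_one_div, div_lt_one hp1]; linarith
        have h6 : (0 : ℝ) < 1 / ((m : ℝ) + 1) := by positivity
        linarith
      push_cast
      push_cast at h2
      linarith
  have expand : ∑ i ∈ Finset.Icc 2 (m + 1), 2 * ((1 : ℝ) / ((i : ℝ) + m))
      - ∑ i ∈ Finset.Icc 2 (m + 1), (1 : ℝ) / (i : ℝ)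
      = ∑ i ∈ Finset.Icc 2 (m + 1), (2 * ((1 : ℝ) / ((i : ℝ) + m))
        - (1 : ℝ) / (i : ℝ)) := (Finset.sum_sub_distrib _ _).symm
  linarith [key, expand]

/-- Odd-k case: for odd k ≥ 1,
`∑_{i=1}^{(k+1)/2} 1/i > 2 · ∑_{j=(k+3)/2}^{k} 1/j`. -/
theorem stmt_4 (k : ℕ) (hk : 1 ≤ k) (hodd : Odd k) :
    (2 * ∑ j ∈ Finset.Icc ((k + 3) / 2) k, (1 : ℝ) / (j : ℝ)) <
      ∑ i ∈ Finset.Icc 1 ((k + 1) / 2), (1 : ℝ) / (i : ℝ) := by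
  obtain ⟨m, rfl⟩ := hodd
  have e1 : (2 * m + 1 + 3) / 2 = m + 2 := by omega
  have e2 : (2 * m + 1 + 1) / 2 = m + 1 := by omega
  rw [e1, e2]
  exact aux_main m
end

section
/- Let k ≥ 3 be a natural number and let US_1, …, US_k be real numbers with −2 ≤ US_i ≤ 2 for all i. If US_i ∈ {1, 2} (i.e., 1 ≤ US_i ≤ 2) for every i with 1 ≤ i ≤ ⌈k/2⌉, then the weighted sum Σ_{i=1}^{k} US_i/i is strictly positive (and hence US_overall = (Σ_{i=1}^{k} US_i/i)/(Σ_{i=1}^{k} 1/i) is strictly positive). -/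
/-- Proposition 2 (positive half): if the first ⌈k/2⌉ ratings lie in {1, 2}
(i.e. `1 ≤ US i ≤ 2`), the weighted sum and the overall score are strictly
positive (k ≥ 3). -/
theorem stmt_5 (k : ℕ) (hk : 3 ≤ k) (US : ℕ → ℝ)
    (hbound : ∀ i ∈ Finset.Icc 1 k, -2 ≤ US i ∧ US i ≤ 2)
    (hfirst : ∀ i, 1 ≤ i → i ≤ (k + 1) / 2 → 1 ≤ US i ∧ US i ≤ 2) :
    0 < ∑ i ∈ Finset.Icc 1 k, US i / (i : ℝ) ∧
      0 < (∑ i ∈ Finset.Icc 1 k, US i / (i : ℝ)) /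
            (∑ i ∈ Finset.Icc 1 k, (1 : ℝ) / (i : ℝ)) := by
  set m : ℕ := (k + 1) / 2 with hm
  have hm2 : 2 ≤ m := by omega
  have hmk : m ≤ k := by omega
  have hkm : k - m ≤ m := by omega
  have hkm1 : 1 ≤ k - m := by omega
  -- lower bound function
  set g : ℕ → ℝ := fun i => if i ≤ m then 1 / (i : ℝ) else -2 / (i : ℝ) with hg
  have hle : ∀ i ∈ Finset.Icc 1 k, g i ≤ US i / (i : ℝ) := by
    intro i hi
    simp only [Finset.mem_Icc] at hi
    have hipos : (0 : ℝ) < (i : ℝ) := by exact_mod_cast hi.1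
    by_cases h : i ≤ m
    · simp only [hg, if_pos h]
      have := (hfirst i hi.1 h).1
      rw [div_le_div_iff₀ hipos hipos]
      nlinarith
    · simp only [hg, if_neg h]
      have := (hbound i (Finset.mem_Icc.mpr hi)).1
      rw [div_le_div_iff₀ hipos hipos]
      nlinarith
  have hsplit : Finset.Icc 1 k = Finset.Icc 1 m ∪ Finset.Icc (m + 1) k := by
    ext x; simp [Finset.mem_Icc, Finset.mem_union]; omega
  have hdisj : Disjoint (Finset.Icc 1 m) (Finset.Icc (m + 1) k) := by
    rw [Finset.disjoint_left]
    intro a ha hb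
    simp [Finset.mem_Icc] at ha hb; omega
  have hsum_g : ∑ i ∈ Finset.Icc 1 k, g i
      = (∑ i ∈ Finset.Icc 1 m, 1 / (i : ℝ))
        + ∑ i ∈ Finset.Icc (m + 1) k, (-2) / (i : ℝ) := by
    rw [hsplit, Finset.sum_union hdisj]
    congr 1
    · apply Finset.sum_congr rfl
      intro i hi; simp [Finset.mem_Icc] at hi
      simp [hg, hi.2]
    · apply Finset.sum_congr rfl
      intro i hi; simp [Finset.mem_Icc] at hi
      have : ¬ i ≤ m := by omega
      simp [hg, this]
  -- reindex second sum
  have hreindex : ∑ i ∈ Finset.Icc (m + 1) k, (-2 : ℝ) / (i : ℝ)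
      = ∑ j ∈ Finset.Icc 1 (k - m), (-2 : ℝ) / ((j + m : ℕ) : ℝ) := by
    have hmap : Finset.Icc (m + 1) k
        = (Finset.Icc 1 (k - m)).map (addRightEmbedding m) := by
      rw [Finset.map_add_right_Icc]
      congr 1 <;> omega
    rw [hmap, Finset.sum_map]
    simp [addRightEmbedding]
  -- first sum dominates the truncated sum
  have hfirstsum : ∑ j ∈ Finset.Icc 1 (k - m), 1 / ((j : ℝ))
      ≤ ∑ i ∈ Finset.Icc 1 m, 1 / (i : ℝ) := by
    apply Finset.sum_le_sum_of_subset_of_nonneg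
    · intro x hx; simp [Finset.mem_Icc] at hx ⊢; omega
    · intro i hi _
      positivity
  have hkey : 0 < ∑ j ∈ Finset.Icc 1 (k - m),
      (1 / (j : ℝ) + (-2) / ((j + m : ℕ) : ℝ)) := by
    apply Finset.sum_pos'
    · intro j hj
      simp [Finset.mem_Icc] at hj
      have hj1 : (0 : ℝ) < (j : ℝ) := by exact_mod_cast hj.1
      have hjm : (0 : ℝ) < ((j + m : ℕ) : ℝ) := by positivity
      have h2j : (j : ℝ) * 2 ≤ ((j + m : ℕ) : ℝ) := by
        push_cast
        have : j ≤ m := by omega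
        have : (j : ℝ) ≤ (m : ℝ) := by exact_mod_cast this
        linarith
      rw [div_add_div _ _ (ne_of_gt hj1) (ne_of_gt hjm), le_div_iff₀ (by positivity)]
      ring_nf
      nlinarith
    · refine ⟨1, by simp [Finset.mem_Icc]; omega, ?_⟩
      have hm1 : (0 : ℝ) < ((1 + m : ℕ) : ℝ) := by positivity
      have hm2' : (3 : ℝ) ≤ ((1 + m : ℕ) : ℝ) := by
        have : 3 ≤ 1 + m := by omega
        exact_mod_cast this
      have : (-2 : ℝ) / ((1 + m : ℕ) : ℝ) > -1 := by
        rw [gt_iff_lt, lt_div_iff₀ hm1]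
        linarith
      simp only [Nat.cast_one]
      linarith
  have hmain : 0 < ∑ i ∈ Finset.Icc 1 k, US i / (i : ℝ) := by
    have h1 : ∑ i ∈ Finset.Icc 1 k, g i ≤ ∑ i ∈ Finset.Icc 1 k, US i / (i : ℝ) :=
      Finset.sum_le_sum hle
    have h2 : ∑ j ∈ Finset.Icc 1 (k - m),
        (1 / (j : ℝ) + (-2) / ((j + m : ℕ) : ℝ)) ≤ ∑ i ∈ Finset.Icc 1 k, g i := by
      rw [hsum_g, hreindex, Finset.sum_add_distrib]
      linarith
    linarith
  refine ⟨hmain, div_pos hmain ?_⟩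
  apply Finset.sum_pos
  · intro i hi
    simp [Finset.mem_Icc] at hi
    have : (0 : ℝ) < (i : ℝ) := by exact_mod_cast hi.1
    positivity
  · exact ⟨1, by simp [Finset.mem_Icc]; omega⟩
end

section
/- Let k ≥ 3 be a natural number and let US_1, …, US_k be real numbers with −2 ≤ US_i ≤ 2 for all i. If US_i ∈ {−2, −1} (i.e., −2 ≤ US_i ≤ −1) for every i with 1 ≤ i ≤ ⌈k/2⌉, then the weighted sum Σ_{i=1}^{k} US_i/i is strictly negative (and hence US_overall = (Σ_{i=1}^{k} US_i/i)/(Σ_{i=1}^{k} 1/i) is strictly negative). -/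
/-- Proposition 2 (negative half): if the first ⌈k/2⌉ ratings lie in {−2, −1}
(i.e. `−2 ≤ US i ≤ −1`), the weighted sum and the overall score are strictly
negative (k ≥ 3). -/
theorem stmt_6 (k : ℕ) (hk : 3 ≤ k) (US : ℕ → ℝ)
    (hbound : ∀ i ∈ Finset.Icc 1 k, -2 ≤ US i ∧ US i ≤ 2)
    (hfirst : ∀ i, 1 ≤ i → i ≤ (k + 1) / 2 → -2 ≤ US i ∧ US i ≤ -1) :
    (∑ i ∈ Finset.Icc 1 k, US i / (i : ℝ)) < 0 ∧
      (∑ i ∈ Finset.Icc 1 k, US i / (i : ℝ)) /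
            (∑ i ∈ Finset.Icc 1 k, (1 : ℝ) / (i : ℝ)) < 0 := by
  set m := (k + 1) / 2 with hm
  have hm2 : 2 ≤ m := by omega
  have hmk : m ≤ k := by omega
  have hkm : k - m ≤ m := by omega
  have hmR : (2 : ℝ) ≤ (m : ℝ) := by exact_mod_cast hm2
  -- split the sum
  have hsplit : (∑ i ∈ Finset.Icc 1 k, US i / (i : ℝ))
      = (∑ i ∈ Finset.Icc 1 m, US i / (i : ℝ))
        + (∑ i ∈ Finset.Icc (m + 1) k, US i / (i : ℝ)) := by
    have h1 : Finset.Icc 1 k = Finset.Ioc 0 k := by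
      ext x; simp [Nat.lt_iff_add_one_le]
    have h2 : Finset.Icc 1 m = Finset.Ioc 0 m := by
      ext x; simp [Nat.lt_iff_add_one_le]
    have h3 : Finset.Icc (m + 1) k = Finset.Ioc m k := by
      ext x; simp only [Finset.mem_Icc, Finset.mem_Ioc]; omega
    rw [h1, h2, h3, ← Finset.sum_Ioc_consecutive _ (Nat.zero_le m) hmk]
  -- first part bound
  have hA : (∑ i ∈ Finset.Icc 1 m, US i / (i : ℝ))
      ≤ ∑ i ∈ Finset.Icc 1 m, (-1) / (i : ℝ) := by
    apply Finset.sum_le_sum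
    intro i hi
    simp only [Finset.mem_Icc] at hi
    have hipos : (0 : ℝ) < (i : ℝ) := by exact_mod_cast hi.1
    have h := (hfirst i hi.1 hi.2).2
    gcongr
  have hA2 : (∑ i ∈ Finset.Icc 1 m, (-1) / (i : ℝ))
      ≤ -(1 + ((m : ℝ) - 1) / (m : ℝ)) := by
    have hsplit1 : Finset.Icc 1 m = insert 1 (Finset.Icc 2 m) := by
      ext x; simp [Finset.mem_Icc, Finset.mem_insert]; omega
    rw [hsplit1, Finset.sum_insert (by simp)]
    have hbd : ∑ i ∈ Finset.Icc 2 m, (-1) / (i : ℝ)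
        ≤ ∑ i ∈ Finset.Icc 2 m, (-1) / (m : ℝ) := by
      apply Finset.sum_le_sum
      intro i hi
      simp only [Finset.mem_Icc] at hi
      have hipos : (0 : ℝ) < (i : ℝ) := by
        have : 1 ≤ i := by omega
        exact_mod_cast this
      have himR : (i : ℝ) ≤ (m : ℝ) := by exact_mod_cast hi.2
      rw [div_le_div_iff₀ hipos (by positivity)]
      nlinarith
    have hcard : ∑ i ∈ Finset.Icc 2 m, (-1 : ℝ) / (m : ℝ)
        = ((m : ℝ) - 1) * ((-1) / (m : ℝ)) := by
      rw [Finset.sum_const, Nat.card_Icc, nsmul_eq_mul]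
      have : ((m + 1 - 2 : ℕ) : ℝ) = (m : ℝ) - 1 := by
        have h' : (m + 1 - 2 : ℕ) = m - 1 := by omega
        rw [h', Nat.cast_sub (by omega)]; norm_num
      rw [this]
    have hmpos : (0 : ℝ) < (m : ℝ) := by linarith
    have : (((m : ℝ) - 1) * ((-1) / (m : ℝ))) = -(((m : ℝ) - 1) / (m : ℝ)) := by
      field_simp
    nlinarith [hbd, hcard]
  -- second part bound
  have hB : (∑ i ∈ Finset.Icc (m + 1) k, US i / (i : ℝ))
      ≤ (m : ℝ) * (2 / ((m : ℝ) + 1)) := by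
    have hstep : (∑ i ∈ Finset.Icc (m + 1) k, US i / (i : ℝ))
        ≤ ∑ i ∈ Finset.Icc (m + 1) k, (2 : ℝ) / ((m : ℝ) + 1) := by
      apply Finset.sum_le_sum
      intro i hi
      simp only [Finset.mem_Icc] at hi
      have hipos : (0 : ℝ) < (i : ℝ) := by
        have : 1 ≤ i := by omega
        exact_mod_cast this
      have hUSi : US i ≤ 2 := (hbound i (Finset.mem_Icc.mpr ⟨by omega, hi.2⟩)).2
      have h1 : US i / (i : ℝ) ≤ 2 / (i : ℝ) := by gcongr
      have h2 : (2 : ℝ) / (i : ℝ) ≤ 2 / ((m : ℝ) + 1) := by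
        apply div_le_div_of_nonneg_left (by norm_num) (by positivity)
        exact_mod_cast hi.1
      linarith
    have hcard : ∑ i ∈ Finset.Icc (m + 1) k, (2 : ℝ) / ((m : ℝ) + 1)
        = ((k - m : ℕ) : ℝ) * (2 / ((m : ℝ) + 1)) := by
      rw [Finset.sum_const, Nat.card_Icc, nsmul_eq_mul]
      congr 2
      omega
    have hle : ((k - m : ℕ) : ℝ) ≤ (m : ℝ) := by exact_mod_cast hkm
    have hpos : (0 : ℝ) ≤ 2 / ((m : ℝ) + 1) := by positivity
    calc _ ≤ ((k - m : ℕ) : ℝ) * (2 / ((m : ℝ) + 1)) := by rw [← hcard]; exact hstep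
      _ ≤ (m : ℝ) * (2 / ((m : ℝ) + 1)) := mul_le_mul_of_nonneg_right hle hpos
  -- combine
  have hneg : (∑ i ∈ Finset.Icc 1 k, US i / (i : ℝ)) < 0 := by
    rw [hsplit]
    have hfin : -(1 + ((m : ℝ) - 1) / (m : ℝ)) + (m : ℝ) * (2 / ((m : ℝ) + 1)) < 0 := by
      have hmpos : (0 : ℝ) < (m : ℝ) := by linarith
      have hm1pos : (0 : ℝ) < (m : ℝ) + 1 := by linarith
      have e1 : -(1 + ((m : ℝ) - 1) / (m : ℝ)) + (m : ℝ) * (2 / ((m : ℝ) + 1))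
          = (-((2 * (m : ℝ) - 1) * ((m : ℝ) + 1)) + 2 * (m : ℝ) * (m : ℝ))
            / ((m : ℝ) * ((m : ℝ) + 1)) := by field_simp; ring
      rw [e1]
      apply div_neg_of_neg_of_pos _ (by positivity)
      nlinarith
    linarith [hA, hA2, hB]
  refine ⟨hneg, ?_⟩
  have hden : (0 : ℝ) < ∑ i ∈ Finset.Icc 1 k, (1 : ℝ) / (i : ℝ) := by
    apply Finset.sum_pos
    · intro i hi
      simp only [Finset.mem_Icc] at hi
      have : (0 : ℝ) < (i : ℝ) := by exact_mod_cast hi.1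
      positivity
    · exact ⟨1, Finset.mem_Icc.mpr ⟨le_refl 1, by omega⟩⟩
  exact div_neg_of_neg_of_pos hneg hden
end

section
/- Let (X_i)_{i≥1} be independent real random variables on a probability space, each uniformly distributed on the five-point set {−2, −1, 0, 1, 2} (each value with probability 1/5). Then almost surely the normalized score (Σ_{i=1}^{k} X_i/i)/(Σ_{i=1}^{k} 1/i) tends to 0 as k → ∞. -/
open MeasureTheory Filter
open Asymptotics in
private lemma stmt10_det_aux {u : ℕ → ℝ}
    (h : Tendsto (fun n => (∑ i ∈ Finset.range n, u i) / n) atTop (nhds 0)) :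
    Tendsto (fun k => (∑ i ∈ Finset.range k, u i / ((i : ℝ) + 1)) /
      (∑ i ∈ Finset.range k, (1 : ℝ) / ((i : ℝ) + 1))) atTop (nhds 0) := by
  set T : ℕ → ℝ := fun n => ∑ i ∈ Finset.range n, u i with hT
  set H : ℕ → ℝ := fun k => ∑ i ∈ Finset.range k, (1 : ℝ) / ((i : ℝ) + 1) with hHdef
  have hHnonneg : ∀ k, 0 ≤ H k := fun k => Finset.sum_nonneg (fun i _ => by positivity)
  have hH : Tendsto H atTop atTop := Real.tendsto_sum_range_one_div_nat_succ_atTop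
  have hHnorm : Tendsto (fun k => ‖H k‖) atTop atTop :=
    hH.congr (fun k => (Real.norm_of_nonneg (hHnonneg k)).symm)
  -- first piece
  have h1 : (fun k => T k / k) =o[atTop] H :=
    ((isLittleO_one_iff ℝ).2 h).trans (isLittleO_const_left.2 (Or.inr hHnorm))
  -- second piece
  set c : ℕ → ℝ := fun i => (T (i + 1) / ((i : ℝ) + 1)) * (1 / ((i : ℝ) + 2)) with hc
  have ha : Tendsto (fun i : ℕ => T (i + 1) / ((i : ℝ) + 1)) atTop (nhds 0) := by
    have h' := h.comp (tendsto_add_atTop_nat 1)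
    exact h'.congr fun i => by simp only [Function.comp_apply, Nat.cast_add, Nat.cast_one]; rfl
  have h2 : c =o[atTop] (fun i => (1 : ℝ) / ((i : ℝ) + 1)) := by
    rw [isLittleO_iff]
    intro ε hε
    have han := ha.norm
    rw [norm_zero] at han
    filter_upwards [han.eventually_le_const hε] with i hi
    have h1i : (0:ℝ) < (i : ℝ) + 1 := by positivity
    have heq : ‖c i‖ = ‖T (i + 1) / ((i : ℝ) + 1)‖ * (1 / ((i : ℝ) + 2)) := by
      rw [hc, norm_mul, Real.norm_of_nonneg (by positivity : (0:ℝ) ≤ 1 / ((i : ℝ) + 2))]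
    rw [heq, Real.norm_of_nonneg (by positivity : (0:ℝ) ≤ 1 / ((i : ℝ) + 1))]
    have hle : (1:ℝ) / ((i : ℝ) + 2) ≤ 1 / ((i : ℝ) + 1) := by
      apply one_div_le_one_div_of_le h1i; linarith
    exact mul_le_mul hi hle (by positivity) hε.le
  have h3 : (fun m => ∑ i ∈ Finset.range m, c i) =o[atTop] H :=
    Asymptotics.IsLittleO.sum_range h2 (fun i => by positivity) hH
  have h4 : (fun k => ∑ i ∈ Finset.range (k - 1), c i) =o[atTop] H := by
    have comp := h3.comp_tendsto (tendsto_sub_atTop_nat 1)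
    refine comp.trans_isBigO (isBigO_of_le' (c := 1) atTop (fun k => ?_))
    simp only [Function.comp_apply, one_mul]
    rw [Real.norm_of_nonneg (hHnonneg _), Real.norm_of_nonneg (hHnonneg _)]
    exact Finset.sum_le_sum_of_subset_of_nonneg
      (Finset.range_subset_range.2 (Nat.sub_le k 1)) (fun i _ _ => by positivity)
  -- Abel identity
  have habel : ∀ᶠ k in atTop, T k / k + ∑ i ∈ Finset.range (k - 1), c i
      = ∑ i ∈ Finset.range k, u i / ((i : ℝ) + 1) := by
    filter_upwards [Ici_mem_atTop 1] with k hk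
    have hab := Finset.sum_range_by_parts (fun i : ℕ => (1 : ℝ) / ((i : ℝ) + 1)) u k
    simp only [smul_eq_mul] at hab
    have hcast : ((k - 1 : ℕ) : ℝ) = (k : ℝ) - 1 := by
      rw [Nat.cast_sub hk]; norm_num
    have hkpos : (0:ℝ) < (k : ℝ) := by exact_mod_cast hk
    have e0 : ∀ i : ℕ, (1:ℝ) / ((i:ℝ)+1) * u i = u i / ((i:ℝ)+1) := fun i => by ring
    have e1 : (1:ℝ) / (((k-1:ℕ):ℝ)+1) * T k = T k / k := by
      rw [hcast]; ring_nf
    have e2 : ∑ i ∈ Finset.range (k-1), ((1:ℝ)/(((i+1:ℕ):ℝ)+1) - 1/((i:ℝ)+1)) * T (i+1)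
        = -∑ i ∈ Finset.range (k-1), c i := by
      rw [← Finset.sum_neg_distrib]
      apply Finset.sum_congr rfl
      intro i _
      have hi1 : ((i:ℝ)+1) ≠ 0 := by positivity
      have hi2 : ((i:ℝ)+2) ≠ 0 := by positivity
      push_cast
      rw [hc]
      have key : (1:ℝ)/((i:ℝ)+2) - 1/((i:ℝ)+1) = -((1/((i:ℝ)+1)) * (1/((i:ℝ)+2))) := by
        field_simp
        ring
      rw [show ((i:ℝ)+1+1) = ((i:ℝ)+2) from by ring, key]
      ring
    simp only [e0] at hab
    rw [hab, e1, e2]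
    ring
  have key : (fun k => ∑ i ∈ Finset.range k, u i / ((i : ℝ) + 1)) =o[atTop] H :=
    (h1.add h4).congr' habel EventuallyEq.rfl
  exact key.tendsto_div_nhds_zero

/-- Proposition 3, case (i), conclusion: for independent ratings, each uniform
on {−2, −1, 0, 1, 2}, the normalized score tends to 0 almost surely. -/
theorem stmt_10 {Ω : Type*} [MeasurableSpace Ω] (μ : Measure Ω)
    [IsProbabilityMeasure μ] (X : ℕ → Ω → ℝ)
    (hmeas : ∀ i, Measurable (X i))
    (hindep : ProbabilityTheory.iIndepFun X μ)
    (hval : ∀ i, 1 ≤ i → ∀ ω, X i ω ∈ ({-2, -1, 0, 1, 2} : Set ℝ))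
    (hunif : ∀ i, 1 ≤ i → ∀ c ∈ ({-2, -1, 0, 1, 2} : Set ℝ),
      μ {ω | X i ω = c} = 1 / 5) :
    ∀ᵐ ω ∂μ,
      Tendsto (fun k => (∑ i ∈ Finset.Icc 1 k, X i ω / (i : ℝ)) /
          (∑ i ∈ Finset.Icc 1 k, (1 : ℝ) / (i : ℝ))) atTop (nhds 0) := by
  classical
  -- the law of each `X i`, `i ≥ 1`
  have hmapeq : ∀ i, 1 ≤ i → ∀ s : Set ℝ,
      μ (X i ⁻¹' s) = ∑ c ∈ ({-2, -1, 0, 1, 2} : Finset ℝ),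
        (if c ∈ s then (1/5 : ENNReal) else 0) := by
    intro i hi s
    classical
    set B : ℝ → Set Ω := fun c => if c ∈ s then {ω | X i ω = c} else ∅ with hB
    have hdecomp : X i ⁻¹' s = ⋃ c ∈ ({-2, -1, 0, 1, 2} : Finset ℝ), B c := by
      ext ω
      simp only [Set.mem_preimage, Set.mem_iUnion]
      constructor
      · intro hω
        refine ⟨X i ω, by simpa using hval i hi ω, ?_⟩
        simp [hB, hω]
      · rintro ⟨c, hc, hω⟩
        by_cases hcs : c ∈ s
        · simp only [hB, if_pos hcs, Set.mem_setOf_eq] at hω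
          rwa [hω]
        · simp [hB, if_neg hcs] at hω
    rw [hdecomp, measure_biUnion_finset ?_ ?_]
    · apply Finset.sum_congr rfl
      intro c hc
      have hcS : c ∈ ({-2, -1, 0, 1, 2} : Set ℝ) := by simpa using hc
      by_cases hcs : c ∈ s
      · rw [if_pos hcs, hB]
        simp only [if_pos hcs]
        exact hunif i hi c hcS
      · simp [hB, if_neg hcs]
    · intro c _ c' _ hne
      rw [Function.onFun, Set.disjoint_left]
      intro ω hω hω'
      by_cases h1 : c ∈ s
      · by_cases h2 : c' ∈ s
        · simp only [hB, if_pos h1, Set.mem_setOf_eq] at hω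
          simp only [hB, if_pos h2, Set.mem_setOf_eq] at hω'
          exact hne (hω.symm.trans hω')
        · simp [hB, if_neg h2] at hω'
      · simp [hB, if_neg h1] at hω
    · intro c _
      by_cases h1 : c ∈ s
      · rw [hB]
        simp only [if_pos h1]
        exact hmeas i (measurableSet_singleton c)
      · simp [hB, if_neg h1]
  -- the shifted sequence
  set Y : ℕ → Ω → ℝ := fun j => X (j + 1) with hY
  have hident : ∀ j, ProbabilityTheory.IdentDistrib (Y j) (Y 0) μ μ := by
    intro j
    refine ⟨(hmeas _).aemeasurable, (hmeas _).aemeasurable, ?_⟩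
    refine Measure.ext fun s hs => ?_
    rw [Measure.map_apply (hmeas _) hs, Measure.map_apply (hmeas _) hs,
      hmapeq (j + 1) (by omega) s, hmapeq 1 le_rfl s]
  have hpair : Pairwise (Function.onFun (ProbabilityTheory.IndepFun · · μ) Y) := by
    intro i j hij
    exact hindep.indepFun (by omega : i + 1 ≠ j + 1)
  have hbound : ∀ ω, ‖X 1 ω‖ ≤ 2 := by
    intro ω
    have := hval 1 le_rfl ω
    simp only [Set.mem_insert_iff, Set.mem_singleton_iff] at this
    rcases this with h | h | h | h | h <;> rw [h] <;> norm_num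
  have hint : Integrable (Y 0) μ :=
    ⟨(hmeas 1).aestronglyMeasurable,
      HasFiniteIntegral.of_bounded (C := 2) (ae_of_all _ hbound)⟩
  have hexp : ∫ ω, Y 0 ω ∂μ = 0 := by
    have hpt : ∀ ω, X 1 ω = ∑ c ∈ ({-2, -1, 0, 1, 2} : Finset ℝ),
        ({ω | X 1 ω = c}).indicator (fun _ => c) ω := by
      intro ω
      have := hval 1 le_rfl ω
      simp only [Set.mem_insert_iff, Set.mem_singleton_iff] at this
      rcases this with h | h | h | h | h <;>
        · simp only [Set.indicator_apply, Set.mem_setOf_eq, h]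
          norm_num
    have hmeasA : ∀ c : ℝ, MeasurableSet {ω | X 1 ω = c} :=
      fun c => hmeas 1 (measurableSet_singleton c)
    calc ∫ ω, Y 0 ω ∂μ
        = ∫ ω, ∑ c ∈ ({-2, -1, 0, 1, 2} : Finset ℝ),
            ({ω | X 1 ω = c}).indicator (fun _ => c) ω ∂μ :=
          integral_congr_ae (ae_of_all _ hpt)
      _ = ∑ c ∈ ({-2, -1, 0, 1, 2} : Finset ℝ),
            ∫ ω, ({ω | X 1 ω = c}).indicator (fun _ => c) ω ∂μ :=
          integral_finset_sum _ (fun c _ =>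
            (integrable_const c).indicator (hmeasA c))
      _ = ∑ c ∈ ({-2, -1, 0, 1, 2} : Finset ℝ), (μ {ω | X 1 ω = c}).toReal • c := by
          refine Finset.sum_congr rfl fun c _ => ?_
          rw [integral_indicator_const _ (hmeasA c), Measure.real]
      _ = 0 := by
          have h5 : ∀ c ∈ ({-2, -1, 0, 1, 2} : Finset ℝ),
              (μ {ω | X 1 ω = c}).toReal • c = (1/5 : ℝ) * c := by
            intro c hc
            have hcS : c ∈ ({-2, -1, 0, 1, 2} : Set ℝ) := by simpa using hc
            rw [hunif 1 le_rfl c hcS]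
            norm_num
          rw [Finset.sum_congr rfl h5]
          norm_num
  have hslln := ProbabilityTheory.strong_law_ae_real Y hint hpair hident
  rw [hexp] at hslln
  filter_upwards [hslln] with ω hω
  have := stmt10_det_aux hω
  have hIcc : ∀ k, (∑ i ∈ Finset.Icc 1 k, X i ω / (i : ℝ)) =
      ∑ i ∈ Finset.range k, Y i ω / ((i : ℝ) + 1) := by
    intro k
    rw [← Finset.Ico_add_one_right_eq_Icc, Finset.sum_Ico_eq_sum_range]
    refine Finset.sum_congr rfl fun i _ => ?_
    rw [hY]
    push_cast
    rw [add_comm 1 i, add_comm (1:ℝ) (i:ℝ)]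
  have hIcc2 : ∀ k : ℕ, (∑ i ∈ Finset.Icc 1 k, (1:ℝ) / ((i : ℕ) : ℝ)) =
      ∑ i ∈ Finset.range k, (1 : ℝ) / ((i : ℝ) + 1) := by
    intro k
    rw [← Finset.Ico_add_one_right_eq_Icc, Finset.sum_Ico_eq_sum_range]
    refine Finset.sum_congr rfl fun i _ => ?_
    push_cast
    rw [add_comm (1:ℝ) (i:ℝ)]
  simpa only [hIcc, hIcc2] using this
end

section
/- Let (X_i)_{i≥1} be independent, identically distributed real random variables taking values in {−2, −1, 0, 1, 2}, with P(X_i = −2) = p1, P(X_i = −1) = p2, P(X_i = 0) = p3, P(X_i = 1) = p4, P(X_i = 2) = p5, and suppose the mean 2p5 + p4 − p2 − 2p1 is nonzero. Then almost surely the series Σ_{i=1}^{∞} X_i/i does not converge, i.e., almost surely the partial sums Σ_{i=1}^{k} X_i/i do not tend to a finite limit. -/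
open MeasureTheory Filter

section aux

/-- Kronecker's lemma, specialized. -/
lemma my_kronecker (c : ℕ → ℝ) (L : ℝ)
    (h : Tendsto (fun k => ∑ i ∈ Finset.Icc 1 k, c i / (i : ℝ)) atTop (nhds L)) :
    Tendsto (fun n : ℕ => ((n : ℝ))⁻¹ * ∑ i ∈ Finset.Icc 1 n, c i) atTop (nhds 0) := by
  set b : ℕ → ℝ := fun k => ∑ i ∈ Finset.Icc 1 k, c i / (i : ℝ) with hb
  have key : ∀ n : ℕ, ∑ i ∈ Finset.Icc 1 n, c i
      = n * b n - ∑ k ∈ Finset.range n, b k := by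
    intro n
    induction n with
    | zero => simp [hb]
    | succ n ih =>
      have hbs : b (n + 1) = b n + c (n + 1) / ((n : ℝ) + 1) := by
        simp [hb, Finset.sum_Icc_succ_top (Nat.le_add_left 1 n)]
      have hne : ((n : ℝ) + 1) ≠ 0 := by positivity
      rw [Finset.sum_Icc_succ_top (Nat.le_add_left 1 n), ih, Finset.sum_range_succ, hbs]
      push_cast
      field_simp
      ring
  have hc : Tendsto (fun n : ℕ => b n - ((n : ℝ))⁻¹ * ∑ k ∈ Finset.range n, b k)
      atTop (nhds (L - L)) := h.sub h.cesaro
  rw [sub_self] at hc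
  apply hc.congr'
  filter_upwards [eventually_ge_atTop 1] with n hn
  have hn0 : ((n : ℝ)) ≠ 0 := Nat.cast_ne_zero.2 (by omega)
  rw [key]
  field_simp

lemma my_identDistrib {Ω : Type*} [MeasurableSpace Ω] (μ : Measure Ω)
    (f g : Ω → ℝ) (hf : Measurable f) (hg : Measurable g)
    (hfv : ∀ ω, f ω ∈ ({-2, -1, 0, 1, 2} : Set ℝ))
    (hgv : ∀ ω, g ω ∈ ({-2, -1, 0, 1, 2} : Set ℝ))
    (h : ∀ v ∈ ({-2, -1, 0, 1, 2} : Set ℝ), μ {ω | f ω = v} = μ {ω | g ω = v}) :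
    ProbabilityTheory.IdentDistrib f g μ μ := by
  classical
  refine ⟨hf.aemeasurable, hg.aemeasurable, ?_⟩
  ext s hs
  rw [Measure.map_apply hf hs, Measure.map_apply hg hs]
  set V : Finset ℝ := {-2, -1, 0, 1, 2} with hV
  have hVset : ∀ x : ℝ, x ∈ ({-2, -1, 0, 1, 2} : Set ℝ) ↔ x ∈ V := by
    intro x; simp [hV]
  have claim : ∀ (φ : Ω → ℝ), (∀ ω, φ ω ∈ ({-2, -1, 0, 1, 2} : Set ℝ)) →
      φ ⁻¹' s = ⋃ v ∈ (V.filter (· ∈ s)), {ω | φ ω = v} := by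
    intro φ hφ
    ext ω
    simp only [Set.mem_preimage, Set.mem_iUnion, Finset.mem_filter, Set.mem_setOf_eq]
    constructor
    · intro hω
      exact ⟨φ ω, ⟨(hVset _).1 (hφ ω), hω⟩, rfl⟩
    · rintro ⟨v, ⟨_, hvs⟩, rfl⟩
      exact hvs
  have hdisj : ∀ (φ : Ω → ℝ), (↑(V.filter (· ∈ s)) : Set ℝ).PairwiseDisjoint
      (fun v => {ω | φ ω = v}) := by
    intro φ v _ w _ hvw
    refine Set.disjoint_left.2 ?_
    rintro ω (hv : φ ω = v) (hw : φ ω = w)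
    exact hvw (hv ▸ hw ▸ rfl)
  have hmf : ∀ (φ : Ω → ℝ), Measurable φ → ∀ v ∈ V.filter (· ∈ s),
      MeasurableSet {ω | φ ω = v} := by
    intro φ hφ v _
    exact hφ (measurableSet_singleton v)
  rw [claim f hfv, claim g hgv,
    measure_biUnion_finset (hdisj f) (hmf f hf),
    measure_biUnion_finset (hdisj g) (hmf g hg)]
  refine Finset.sum_congr rfl fun v hv => ?_
  exact h v ((hVset v).2 (Finset.mem_filter.1 hv).1)

end aux

/-- Proposition 3, case (ii): for i.i.d. ratings on {−2, −1, 0, 1, 2} with a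
nonzero mean `2p5 + p4 − p2 − 2p1`, the series `∑ X i / i` almost surely does
not converge. -/
theorem stmt_12 {Ω : Type*} [MeasurableSpace Ω] (μ : Measure Ω)
    [IsProbabilityMeasure μ] (X : ℕ → Ω → ℝ)
    (hmeas : ∀ i, Measurable (X i))
    (hindep : ProbabilityTheory.iIndepFun X μ)
    (p1 p2 p3 p4 p5 : ENNReal)
    (hval : ∀ i, 1 ≤ i → ∀ ω, X i ω ∈ ({-2, -1, 0, 1, 2} : Set ℝ))
    (h1 : ∀ i, 1 ≤ i → μ {ω | X i ω = -2} = p1)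
    (h2 : ∀ i, 1 ≤ i → μ {ω | X i ω = -1} = p2)
    (h3 : ∀ i, 1 ≤ i → μ {ω | X i ω = 0} = p3)
    (h4 : ∀ i, 1 ≤ i → μ {ω | X i ω = 1} = p4)
    (h5 : ∀ i, 1 ≤ i → μ {ω | X i ω = 2} = p5)
    (hsum : p1 + p2 + p3 + p4 + p5 = 1)
    (hmean : 2 * p5.toReal + p4.toReal - p2.toReal - 2 * p1.toReal ≠ 0) :
    ∀ᵐ ω ∂μ, ¬ ∃ L : ℝ,
      Tendsto (fun k => ∑ i ∈ Finset.Icc 1 k, X i ω / (i : ℝ)) atTop (nhds L) := by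
  -- the shifted sequence
  set Y : ℕ → Ω → ℝ := fun i => X (i + 1) with hY
  have hYmeas : ∀ i, Measurable (Y i) := fun i => hmeas (i + 1)
  -- integrability of Y 0 = X 1
  have hval' : ∀ i, 1 ≤ i → ∀ ω, X i ω = -2 ∨ X i ω = -1 ∨ X i ω = 0 ∨ X i ω = 1 ∨ X i ω = 2 := by
    intro i hi ω
    have := hval i hi ω
    simpa [Set.mem_insert_iff, Set.mem_singleton_iff] using this
  have habs : ∀ ω, ‖X 1 ω‖ ≤ 2 := by
    intro ω
    rcases hval' 1 le_rfl ω with h | h | h | h | h <;> rw [h] <;> norm_num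
  have hint : Integrable (Y 0) μ :=
    (integrable_const (2 : ℝ)).mono' (hmeas 1).aestronglyMeasurable (ae_of_all _ habs)
  -- pairwise independence
  have hYindep : Pairwise (Function.onFun (ProbabilityTheory.IndepFun · · μ) Y) := by
    intro i j hij
    exact hindep.indepFun (show i + 1 ≠ j + 1 by omega)
  -- identical distribution
  have hYident : ∀ i, ProbabilityTheory.IdentDistrib (Y i) (Y 0) μ μ := by
    intro i
    apply my_identDistrib μ _ _ (hmeas (i + 1)) (hmeas 1)
      (hval (i + 1) (by omega)) (hval 1 le_rfl)
    intro v hv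
    rcases hv with rfl | rfl | rfl | rfl | rfl
    · rw [h1 (i + 1) (by omega), h1 1 le_rfl]
    · rw [h2 (i + 1) (by omega), h2 1 le_rfl]
    · rw [h3 (i + 1) (by omega), h3 1 le_rfl]
    · rw [h4 (i + 1) (by omega), h4 1 le_rfl]
    · rw [h5 (i + 1) (by omega), h5 1 le_rfl]
  -- compute the mean
  have hAmeas : ∀ v : ℝ, MeasurableSet {ω | X 1 ω = v} := fun v =>
    hmeas 1 (measurableSet_singleton v)
  have hmean_val : (∫ ω, Y 0 ω ∂μ) = 2 * p5.toReal + p4.toReal - p2.toReal - 2 * p1.toReal := by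
    have hXeq : X 1 = fun ω =>
        Set.indicator {ω | X 1 ω = -2} (fun _ => (-2 : ℝ)) ω
        + Set.indicator {ω | X 1 ω = -1} (fun _ => (-1 : ℝ)) ω
        + Set.indicator {ω | X 1 ω = 1} (fun _ => (1 : ℝ)) ω
        + Set.indicator {ω | X 1 ω = 2} (fun _ => (2 : ℝ)) ω := by
      funext ω
      rcases hval' 1 le_rfl ω with h | h | h | h | h <;>
        norm_num [Set.indicator_apply, h]
    have hI : ∀ v : ℝ, Integrable (Set.indicator {ω | X 1 ω = v} (fun _ => v)) μ :=
      fun v => (integrable_const v).indicator (hAmeas v)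
    have i1 : Integrable (fun ω => Set.indicator {ω | X 1 ω = -2} (fun _ => (-2 : ℝ)) ω
        + Set.indicator {ω | X 1 ω = -1} (fun _ => (-1 : ℝ)) ω) μ := (hI _).add (hI _)
    have i2 : Integrable (fun ω => Set.indicator {ω | X 1 ω = -2} (fun _ => (-2 : ℝ)) ω
        + Set.indicator {ω | X 1 ω = -1} (fun _ => (-1 : ℝ)) ω
        + Set.indicator {ω | X 1 ω = 1} (fun _ => (1 : ℝ)) ω) μ := i1.add (hI _)
    calc (∫ ω, Y 0 ω ∂μ) = ∫ ω, (Set.indicator {ω | X 1 ω = -2} (fun _ => (-2 : ℝ)) ω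
        + Set.indicator {ω | X 1 ω = -1} (fun _ => (-1 : ℝ)) ω
        + Set.indicator {ω | X 1 ω = 1} (fun _ => (1 : ℝ)) ω
        + Set.indicator {ω | X 1 ω = 2} (fun _ => (2 : ℝ)) ω) ∂μ := by
          exact integral_congr_ae (ae_of_all _ fun ω => congrFun hXeq ω)
      _ = (μ {ω | X 1 ω = -2}).toReal • (-2 : ℝ)
          + (μ {ω | X 1 ω = -1}).toReal • (-1 : ℝ)
          + (μ {ω | X 1 ω = 1}).toReal • (1 : ℝ)
          + (μ {ω | X 1 ω = 2}).toReal • (2 : ℝ) := by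
          rw [integral_add i2 (hI _),
            integral_add i1 (hI _),
            integral_add (hI _) (hI _),
            integral_indicator_const _ (hAmeas _), integral_indicator_const _ (hAmeas _),
            integral_indicator_const _ (hAmeas _), integral_indicator_const _ (hAmeas _),
            measureReal_def, measureReal_def, measureReal_def, measureReal_def]
      _ = 2 * p5.toReal + p4.toReal - p2.toReal - 2 * p1.toReal := by
          rw [h1 1 le_rfl, h2 1 le_rfl, h4 1 le_rfl, h5 1 le_rfl]
          simp [smul_eq_mul]
          ring
  -- strong law of large numbers
  have hslln := ProbabilityTheory.strong_law_ae_real Y hint hYindep hYident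
  rw [hmean_val] at hslln
  filter_upwards [hslln] with ω hω
  rintro ⟨L, hL⟩
  have h0 := my_kronecker (fun i => X i ω) L hL
  have hω' : Tendsto (fun n : ℕ => ((n : ℝ))⁻¹ * ∑ i ∈ Finset.Icc 1 n, X i ω) atTop
      (nhds (2 * p5.toReal + p4.toReal - p2.toReal - 2 * p1.toReal)) := by
    apply hω.congr
    intro n
    rw [show Finset.Icc 1 n = Finset.Ico 1 (n + 1) from (Finset.Ico_add_one_right_eq_Icc 1 n).symm,
      Finset.sum_Ico_eq_sum_range]
    simp only [Nat.add_sub_cancel, div_eq_inv_mul]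
    congr 1
    exact Finset.sum_congr rfl fun i _ => by rw [add_comm]
  exact hmean (tendsto_nhds_unique hω' h0)
end
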